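/- arXiv:1107.4365 — 3 statements merged into one kernel-verified Lean document; each statement's English description precedes it below -/
import Mathlib

section
/- Let R = k[X] be a polynomial algebra over a field k in an infinite set X of indeterminates, R₁ the space of homogeneous degree-one polynomials, and M₁,…,M_p pairwise distinct monomials of a common degree d. Then the subspace U = {(L₁,…,L_p) ∈ R₁^p | ∑ᵢ LᵢMᵢ = 0} of R₁^p is finite-dimensional over k. -/
open MvPolynomial

private lemma degree_one_single {X : Type*} {σ : X →₀ ℕ} (h : σ.degree = 1) :
    ∃ y, σ = Finsupp.single y 1 := by
  classical
  have hne : σ.support.Nonempty := by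
    by_contra hc
    rw [Finset.not_nonempty_iff_eq_empty] at hc
    rw [Finsupp.support_eq_empty] at hc
    simp [hc] at h
  obtain ⟨y, hy⟩ := hne
  have hsum : σ y + ∑ z ∈ σ.support.erase y, σ z = 1 := by
    rw [Finset.add_sum_erase _ σ hy]; exact h
  have hy1 : 1 ≤ σ y := Nat.one_le_iff_ne_zero.mpr (Finsupp.mem_support_iff.mp hy)
  have hrest : ∑ z ∈ σ.support.erase y, σ z = 0 := by omega
  have hσy : σ y = 1 := by omega
  refine ⟨y, ?_⟩
  ext z
  rcases eq_or_ne z y with rfl | hz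
  · simp [hσy]
  · rw [Finsupp.single_apply, if_neg (Ne.symm hz)]
    by_contra hzz
    have hzmem : z ∈ σ.support.erase y :=
      Finset.mem_erase.mpr ⟨hz, Finsupp.mem_support_iff.mpr hzz⟩
    have := Finset.sum_eq_zero_iff.mp hrest z hzmem
    exact hzz this

/-- Daigle's lemma: in a polynomial ring over a field `k` in an infinite set `X` of
indeterminates, if `M₁, …, M_p` are pairwise distinct monomials of a common degree `d`, then
`U = {(L₁,…,L_p) ∈ R₁^p | ∑ᵢ Lᵢ Mᵢ = 0}` is a finite-dimensional subspace of `R₁^p`. -/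
theorem daigle_lemma {k : Type*} [Field k] {X : Type*} [Infinite X]
    (p d : ℕ) (m : Fin p → (X →₀ ℕ)) (hm : Function.Injective m)
    (hdeg : ∀ i, (m i).sum (fun _ e => e) = d) :
    FiniteDimensional k
      ↥((Submodule.pi Set.univ (fun _ : Fin p => MvPolynomial.homogeneousSubmodule X k 1)) ⊓
        (LinearMap.ker (∑ i : Fin p,
          (LinearMap.mulLeft k (MvPolynomial.monomial (m i) (1 : k))).comp
            (LinearMap.proj i) : (Fin p → MvPolynomial X k) →ₗ[k] MvPolynomial X k))) := by
  classical
  set S : Finset X := Finset.univ.biUnion (fun i : Fin p => (m i).support) with hSdef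
  set T : Finset (Fin p → MvPolynomial X k) :=
    (Finset.univ ×ˢ S).image (fun q : Fin p × X => Pi.single q.1 (MvPolynomial.X q.2)) with hTdef
  haveI : FiniteDimensional k (Submodule.span k (T : Set (Fin p → MvPolynomial X k))) :=
    inferInstance
  apply Submodule.finiteDimensional_of_le (S₂ := Submodule.span k (T : Set _))
  rintro f ⟨hf1, hf2⟩
  rw [SetLike.mem_coe, Submodule.mem_pi] at hf1
  rw [SetLike.mem_coe, LinearMap.mem_ker, LinearMap.sum_apply] at hf2
  simp only [LinearMap.comp_apply, LinearMap.proj_apply, LinearMap.mulLeft_apply] at hf2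
  -- each coordinate lies in the span of the variables in S
  have hcoord : ∀ i, f i ∈ Submodule.span k
      ((S.image (MvPolynomial.X : X → MvPolynomial X k) : Finset (MvPolynomial X k)) : Set _) := by
    intro i
    have hhom : (f i).IsHomogeneous 1 := hf1 i (Set.mem_univ i)
    have hvan : ∀ x : X, x ∉ S → MvPolynomial.coeff (Finsupp.single x 1) (f i) = 0 := by
      intro x hx
      have hc := congrArg (MvPolynomial.coeff (Finsupp.single x 1 + m i)) hf2
      rw [MvPolynomial.coeff_sum, MvPolynomial.coeff_zero] at hc
      have hterm : ∀ j : Fin p, j ≠ i →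
          MvPolynomial.coeff (Finsupp.single x 1 + m i)
            (MvPolynomial.monomial (m j) (1 : k) * f j) = 0 := by
        intro j hj
        rw [MvPolynomial.coeff_monomial_mul']
        rw [if_neg]
        intro hle
        -- m j ≤ single x 1 + m i, and x not in support of m j, hence m j ≤ m i
        have hjx : m j x = 0 := by
          by_contra hxx
          exact hx (Finset.mem_biUnion.mpr ⟨j, Finset.mem_univ j,
            Finsupp.mem_support_iff.mpr hxx⟩)
        have hle' : m j ≤ m i := by
          intro z
          rcases eq_or_ne z x with rfl | hzx
          · simp [hjx]
          · have := hle z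
            simpa [Finsupp.single_apply, if_neg (Ne.symm hzx)] using this
        have heq : m j = m i := by
          have h1 : m j + (m i - m j) = m i := add_tsub_cancel_of_le hle'
          have hdg : (m j).degree + (m i - m j).degree = (m i).degree := by
            rw [Finsupp.degree_eq_weight_one]
            rw [← map_add, h1]
          have hdi : (m i).degree = d := by
            rw [← hdeg i]; rfl
          have hdj : (m j).degree = d := by
            rw [← hdeg j]; rfl
          have : (m i - m j).degree = 0 := by omega
          rw [Finsupp.degree_eq_zero_iff] at this
          rw [← h1, this, add_zero]
        exact hj (hm heq)
      rw [Finset.sum_eq_single i (fun j _ hj => hterm j hj)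
        (fun h => absurd (Finset.mem_univ i) h)] at hc
      rw [MvPolynomial.coeff_monomial_mul', if_pos le_add_self, add_tsub_cancel_right,
        one_mul] at hc
      exact hc
    -- now express f i as a sum of monomials
    rw [(f i).as_sum]
    apply Submodule.sum_mem
    intro σ hσ
    have hd1 : σ.degree = 1 := by
      by_contra hne
      exact MvPolynomial.mem_support_iff.mp hσ (hhom.coeff_eq_zero hne)
    obtain ⟨y, rfl⟩ := degree_one_single hd1
    have hy : y ∈ S := by
      by_contra hy
      exact MvPolynomial.mem_support_iff.mp hσ (hvan y hy)
    have hmono : MvPolynomial.monomial (Finsupp.single y 1)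
        (MvPolynomial.coeff (Finsupp.single y 1) (f i))
        = MvPolynomial.coeff (Finsupp.single y 1) (f i) • MvPolynomial.X y := by
      rw [show (MvPolynomial.X y : MvPolynomial X k)
          = MvPolynomial.monomial (Finsupp.single y 1) 1 from rfl,
        MvPolynomial.smul_monomial, smul_eq_mul, mul_one]
    rw [hmono]
    exact Submodule.smul_mem _ _ (Submodule.subset_span
      (by exact_mod_cast Finset.mem_image.mpr ⟨y, hy, rfl⟩))
  -- assemble
  have hfs : f = ∑ i : Fin p, Pi.single i (f i) := (Finset.univ_sum_single f).symm
  rw [hfs]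
  apply Submodule.sum_mem
  intro i _
  have hmem : (LinearMap.single k (fun _ : Fin p => MvPolynomial X k) i) (f i) ∈
      Submodule.map (LinearMap.single k (fun _ : Fin p => MvPolynomial X k) i)
        (Submodule.span k ((S.image (MvPolynomial.X : X → MvPolynomial X k) :
          Finset (MvPolynomial X k)) : Set _)) :=
    Submodule.mem_map_of_mem (hcoord i)
  rw [Submodule.map_span] at hmem
  refine Submodule.span_mono ?_ hmem
  rintro v ⟨w, hw, rfl⟩
  rw [Finset.coe_image] at hw
  obtain ⟨y, hy, rfl⟩ := hw
  rw [hTdef]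
  exact_mod_cast Finset.mem_image.mpr ⟨(i, y), Finset.mem_product.mpr ⟨Finset.mem_univ i, hy⟩, rfl⟩
end

section
/- Let V be a module for Vir ⊗ A on which c ⊗ f acts by zero for all f ∈ J (J an ideal of A with J² = 0), and suppose N ∈ ℕ and f ∈ J satisfy (d₀ ⊗ f)^N · V = 0. Then for all 0 ≤ r ≤ N and all nonzero integers i₁,…,i_r: (d_{i₁} ⊗ f)⋯(d_{i_r} ⊗ f)(d₀ ⊗ f)^{N−r} · V = 0. In particular (d_{i₁} ⊗ f)⋯(d_{i_N} ⊗ f)·V = 0 for all i₁,…,i_N ∈ ℤ. -/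
open TensorProduct

private lemma sqz_aux {V : Type*} [AddCommGroup V] [Module ℂ V]
    (T E : ℤ → Module.End ℂ V)
    (hcomm : ∀ m n : ℤ, T m * T n = T n * T m)
    (hCE : ∀ j m : ℤ, E j * T m = T m * E j + ((m : ℂ) - (j : ℂ)) • T (j + m))
    (N : ℕ) (hN : T 0 ^ N = 0) :
    ∀ r : ℕ, r ≤ N → ∀ l : List ℤ, l.length = r →
      (l.map T).prod * T 0 ^ (N - r) = 0 := by
  have hCl : ∀ (m : ℤ) (l : List ℤ), Commute (T m) ((l.map T).prod) := by
    intro m l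
    refine Commute.list_prod_right _ _ ?_
    intro y hy
    obtain ⟨n, -, rfl⟩ := List.mem_map.mp hy
    exact hcomm m n
  have hCp : ∀ (m : ℤ) (s : ℕ), Commute (T m) (T 0 ^ s) := by
    intro m s
    have h : Commute (T m) (T 0) := hcomm m 0
    exact h.pow_right s
  have h0 : ∀ j : ℤ, E j * T 0 = T 0 * E j - (j : ℂ) • T j := by
    intro j
    have h := hCE j 0
    simpa [sub_eq_add_neg] using h
  have h0' : ∀ j : ℤ, T 0 * E j = E j * T 0 + (j : ℂ) • T j := by
    intro j
    rw [h0 j]; abel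
  have hEpow : ∀ (j : ℤ) (s : ℕ),
      E j * T 0 ^ (s + 1) = T 0 ^ (s + 1) * E j - ((j : ℂ) * ((s : ℂ) + 1)) • (T j * T 0 ^ s) := by
    intro j s
    induction s with
    | zero => simpa using h0 j
    | succ s ih =>
      have hc1 : T 0 ^ (s + 1) * T j = T j * T 0 ^ (s + 1) := ((hCp j (s + 1)).symm).eq
      calc E j * T 0 ^ (s + 1 + 1) = (E j * T 0 ^ (s + 1)) * T 0 := by
            rw [pow_succ, mul_assoc]
        _ = (T 0 ^ (s + 1) * E j - ((j : ℂ) * ((s : ℂ) + 1)) • (T j * T 0 ^ s)) * T 0 := by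
            rw [ih]
        _ = T 0 ^ (s + 1) * (E j * T 0) - ((j : ℂ) * ((s : ℂ) + 1)) • (T j * T 0 ^ (s + 1)) := by
            rw [sub_mul, mul_assoc, smul_mul_assoc, mul_assoc, ← pow_succ]
        _ = T 0 ^ (s + 1) * (T 0 * E j - (j : ℂ) • T j)
              - ((j : ℂ) * ((s : ℂ) + 1)) • (T j * T 0 ^ (s + 1)) := by rw [h0 j]
        _ = T 0 ^ (s + 1 + 1) * E j - (j : ℂ) • (T j * T 0 ^ (s + 1))
              - ((j : ℂ) * ((s : ℂ) + 1)) • (T j * T 0 ^ (s + 1)) := by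
            rw [mul_sub, ← mul_assoc, ← pow_succ, mul_smul_comm, hc1]
        _ = T 0 ^ (s + 1 + 1) * E j
              - ((j : ℂ) * (((s + 1 : ℕ) : ℂ) + 1)) • (T j * T 0 ^ (s + 1)) := by
            rw [sub_sub, ← add_smul]
            congr 2
            push_cast
            ring
  intro r
  induction r using Nat.strong_induction_on with
  | _ r IH =>
    intro hr l hl
    subst hl
    cases l with
    | nil => simpa using hN
    | cons j l' =>
      have hr' : l'.length + 1 ≤ N := by simpa using hr
      set k : ℕ := N - (l'.length + 1) with hk
      have hNk : N - l'.length = k + 1 := by omega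
      have hlt : l'.length < (j :: l').length := by simp
      have hP : (l'.map T).prod * T 0 ^ (k + 1) = 0 := by
        have h := IH l'.length hlt (by omega) l' rfl
        rwa [hNk] at h
      have hR : ∀ q : List ℤ, q.length = l'.length →
          (q.map T).prod * T 0 ^ (k + 1) = 0 := by
        intro q hq
        have h := IH l'.length hlt (by omega) q hq
        rwa [hNk] at h
      have hBgen : ∀ q : List ℤ,
          T 0 * ((q.map T).prod * T 0 ^ k) = (q.map T).prod * T 0 ^ (k + 1) := by
        intro q
        rw [← mul_assoc, (hCl 0 q).eq, mul_assoc, ← pow_succ']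
      show ((j :: l').map T).prod * T 0 ^ (N - (j :: l').length) = 0
      have hlen : N - (j :: l').length = k := by simp [hk]
      rw [hlen, List.map_cons, List.prod_cons, mul_assoc]
      rcases eq_or_ne j 0 with rfl | hj
      · rw [hBgen l', hP]
      · have G : ∀ s p : List ℤ, p.length + s.length = l'.length →
            (p.map T).prod * (T 0 * (E j * ((s.map T).prod * T 0 ^ k))) =
            ((p ++ s).map T).prod * (T 0 * (E j * T 0 ^ k)) := by
          intro s
          induction s with
          | nil => intro p _; simp
          | cons i1 s1 ihs =>
            intro p hp
            have hstep : E j * (T i1 * ((s1.map T).prod * T 0 ^ k)) =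
                T i1 * (E j * ((s1.map T).prod * T 0 ^ k))
                  + ((i1 : ℂ) - (j : ℂ)) • (T (j + i1) * ((s1.map T).prod * T 0 ^ k)) := by
              rw [← mul_assoc, hCE j i1, add_mul, smul_mul_assoc, mul_assoc]
            have hz : T 0 * (T (j + i1) * ((s1.map T).prod * T 0 ^ k)) =
                T (j + i1) * ((s1.map T).prod * T 0 ^ (k + 1)) := by
              rw [← mul_assoc, hcomm 0 (j + i1), mul_assoc, hBgen s1]
            have hz2 : (p.map T).prod * (T (j + i1) * ((s1.map T).prod * T 0 ^ (k + 1))) = 0 := by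
              have hlq : (p ++ (j + i1) :: s1).length = l'.length := by
                simp at hp ⊢; omega
              have h := hR (p ++ (j + i1) :: s1) hlq
              simpa [List.map_append, List.prod_append, List.map_cons, List.prod_cons,
                mul_assoc] using h
            calc (p.map T).prod * (T 0 * (E j * (((i1 :: s1).map T).prod * T 0 ^ k)))
                = (p.map T).prod * (T 0 * (E j * (T i1 * ((s1.map T).prod * T 0 ^ k)))) := by
                  rw [List.map_cons, List.prod_cons, mul_assoc]
              _ = (p.map T).prod * (T 0 * (T i1 * (E j * ((s1.map T).prod * T 0 ^ k))))
                  + ((i1 : ℂ) - (j : ℂ)) •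
                    ((p.map T).prod * (T 0 * (T (j + i1) * ((s1.map T).prod * T 0 ^ k)))) := by
                  rw [hstep, mul_add, mul_add, mul_smul_comm, mul_smul_comm]
              _ = (p.map T).prod * (T i1 * (T 0 * (E j * ((s1.map T).prod * T 0 ^ k))))
                  + ((i1 : ℂ) - (j : ℂ)) •
                    ((p.map T).prod * (T (j + i1) * ((s1.map T).prod * T 0 ^ (k + 1)))) := by
                  rw [← mul_assoc (T 0) (T i1), hcomm 0 i1, mul_assoc, hz]
              _ = ((p ++ [i1]).map T).prod * (T 0 * (E j * ((s1.map T).prod * T 0 ^ k))) := by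
                  rw [hz2, smul_zero, add_zero, List.map_append, List.prod_append]
                  simp [mul_assoc]
              _ = ((p ++ [i1] ++ s1).map T).prod * (T 0 * (E j * T 0 ^ k)) := by
                  refine ihs (p ++ [i1]) ?_
                  simp at hp ⊢; omega
              _ = ((p ++ i1 :: s1).map T).prod * (T 0 * (E j * T 0 ^ k)) := by
                  simp
        have hG := G l' [] (by simp)
        simp only [List.map_nil, List.prod_nil, one_mul, List.nil_append] at hG
        have hQP : (l'.map T).prod * (T j * T 0 ^ k) = T j * ((l'.map T).prod * T 0 ^ k) := by
          rw [← mul_assoc, ← (hCl j l').eq, mul_assoc]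
        have hterm2 : E j * (T 0 * ((l'.map T).prod * T 0 ^ k)) = 0 := by
          rw [hBgen l', hP, mul_zero]
        have e1 : T 0 * (E j * T 0 ^ k) =
            E j * T 0 ^ (k + 1) + (j : ℂ) • (T j * T 0 ^ k) := by
          rw [← mul_assoc, h0' j, add_mul, smul_mul_assoc, mul_assoc, ← pow_succ']
        have hfirst : (l'.map T).prod * (T 0 * (E j * T 0 ^ k)) =
            (-((j : ℂ) * (k : ℂ))) • (T j * ((l'.map T).prod * T 0 ^ k)) := by
          rw [e1, hEpow j k, mul_add, mul_sub, mul_smul_comm, mul_smul_comm,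
            ← mul_assoc, hP, zero_mul, zero_sub, hQP]
          module
        have hjW : (j : ℂ) • (T j * ((l'.map T).prod * T 0 ^ k)) =
            T 0 * (E j * ((l'.map T).prod * T 0 ^ k))
              - E j * (T 0 * ((l'.map T).prod * T 0 ^ k)) := by
          have h2 : (j : ℂ) • T j = T 0 * E j - E j * T 0 := by
            rw [h0 j]; abel
          calc (j : ℂ) • (T j * ((l'.map T).prod * T 0 ^ k))
              = ((j : ℂ) • T j) * ((l'.map T).prod * T 0 ^ k) := (smul_mul_assoc _ _ _).symm
            _ = (T 0 * E j - E j * T 0) * ((l'.map T).prod * T 0 ^ k) := by rw [h2]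
            _ = T 0 * (E j * ((l'.map T).prod * T 0 ^ k))
                - E j * (T 0 * ((l'.map T).prod * T 0 ^ k)) := by
                rw [sub_mul, mul_assoc, mul_assoc]
        have hkey : (j : ℂ) • (T j * ((l'.map T).prod * T 0 ^ k)) =
            (-((j : ℂ) * (k : ℂ))) • (T j * ((l'.map T).prod * T 0 ^ k)) := by
          rw [hjW, hterm2, sub_zero, hG, hfirst]
        have hzero : ((j : ℂ) * (1 + (k : ℂ))) • (T j * ((l'.map T).prod * T 0 ^ k)) = 0 := by
          have h3 : ((j : ℂ) + (j : ℂ) * (k : ℂ)) • (T j * ((l'.map T).prod * T 0 ^ k)) = 0 := by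
            rw [add_smul, hkey]
            module
          rw [← h3]
          congr 1
          ring
        have hjc : ((j : ℂ) * (1 + (k : ℂ))) ≠ 0 := by
          apply mul_ne_zero
          · exact_mod_cast hj
          · have hc2 : ((1 + k : ℕ) : ℂ) ≠ 0 := Nat.cast_ne_zero.mpr (by omega)
            push_cast at hc2
            exact hc2
        exact (smul_eq_zero.mp hzero).resolve_left hjc

/-- Let `J ⊴ A` be an ideal with `J² = 0`, and `V` a `(Vir ⊗ A)`-module on which `c ⊗ g` acts
by zero for all `g ∈ J`.  If `f ∈ J` and `N ∈ ℕ` satisfy `(d₀ ⊗ f)^N · V = 0`, then for all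
`0 ≤ r ≤ N` and nonzero integers `i₁, …, i_r` we have
`(d_{i₁} ⊗ f) ⋯ (d_{i_r} ⊗ f)(d₀ ⊗ f)^{N−r} · V = 0`.  In particular
`(d_{i₁} ⊗ f) ⋯ (d_{i_N} ⊗ f) · V = 0` for all `i₁, …, i_N ∈ ℤ`. -/
theorem square_zero_ideal_nilpotency
    {L : Type*} [LieRing L] [LieAlgebra ℂ L] (c : L) (d : ℤ → L)
    (hli : LinearIndependent ℂ (fun o : Option ℤ => o.elim c d))
    (hspan : Submodule.span ℂ (Set.range (fun o : Option ℤ => o.elim c d)) = ⊤)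
    (hdc : ∀ n : ℤ, ⁅d n, c⁆ = 0)
    (hdd : ∀ m n : ℤ, ⁅d m, d n⁆ = ((n : ℂ) - (m : ℂ)) • d (m + n)
      + (if m + n = 0 then (((m : ℂ) ^ 3 - (m : ℂ)) / 12) else 0) • c)
    {A : Type*} [CommRing A] [Algebra ℂ A]
    [LieAlgebra ℂ (A ⊗[ℂ] L)]
    {V : Type*} [AddCommGroup V] [Module ℂ V]
    [LieRingModule (A ⊗[ℂ] L) V] [LieModule ℂ (A ⊗[ℂ] L) V]
    (J : Ideal A) (hJ2 : J * J = ⊥)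
    (hc : ∀ g ∈ J, ∀ v : V, ⁅(g ⊗ₜ[ℂ] c : A ⊗[ℂ] L), v⁆ = 0)
    (f : A) (hf : f ∈ J) (N : ℕ)
    (hN : ∀ v : V,
      ((LieModule.toEnd ℂ (A ⊗[ℂ] L) V (f ⊗ₜ[ℂ] d 0)) ^ N) v = 0) :
    (∀ r : ℕ, r ≤ N → ∀ i : Fin r → ℤ, (∀ j, i j ≠ 0) → ∀ v : V,
      ((List.ofFn fun j =>
          LieModule.toEnd ℂ (A ⊗[ℂ] L) V (f ⊗ₜ[ℂ] d (i j))).prod *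
        (LieModule.toEnd ℂ (A ⊗[ℂ] L) V (f ⊗ₜ[ℂ] d 0)) ^ (N - r)) v = 0) ∧
    (∀ i : Fin N → ℤ, ∀ v : V,
      ((List.ofFn fun j =>
          LieModule.toEnd ℂ (A ⊗[ℂ] L) V (f ⊗ₜ[ℂ] d (i j))).prod) v = 0) := by
  letI : LieRing (Module.End ℂ V) := LieRing.ofAssociativeRing
  have hff : f * f = 0 := by
    have h1 : f * f ∈ J * J := Ideal.mul_mem_mul hf hf
    rw [hJ2] at h1
    exact Ideal.mem_bot.mp h1
  set T : ℤ → Module.End ℂ V :=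
    fun n => LieModule.toEnd ℂ (A ⊗[ℂ] L) V (f ⊗ₜ[ℂ] d n) with hTdef
  set E : ℤ → Module.End ℂ V :=
    fun n => LieModule.toEnd ℂ (A ⊗[ℂ] L) V ((1 : A) ⊗ₜ[ℂ] d n) with hEdef
  have hc0 : LieModule.toEnd ℂ (A ⊗[ℂ] L) V (f ⊗ₜ[ℂ] c) = 0 := by
    ext v
    simpa using hc f hf v
  have hcomm : ∀ m n : ℤ, T m * T n = T n * T m := by
    intro m n
    have h := (LieModule.toEnd ℂ (A ⊗[ℂ] L) V).map_lie (f ⊗ₜ[ℂ] d m) (f ⊗ₜ[ℂ] d n)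
    rw [LieAlgebra.ExtendScalars.bracket_tmul, hff, zero_tmul, map_zero,
      Ring.lie_def] at h
    exact sub_eq_zero.mp h.symm
  have hCE : ∀ j m : ℤ, E j * T m = T m * E j + ((m : ℂ) - (j : ℂ)) • T (j + m) := by
    intro j m
    set μ : ℂ := if j + m = 0 then (((j : ℂ) ^ 3 - (j : ℂ)) / 12) else 0 with hμ
    have hμf : μ • f ∈ J := by
      rw [Algebra.smul_def]
      exact Ideal.mul_mem_left J _ hf
    have hgc : LieModule.toEnd ℂ (A ⊗[ℂ] L) V ((μ • f) ⊗ₜ[ℂ] c) = 0 := by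
      ext v
      simpa using hc (μ • f) hμf v
    set φ : L →+ Module.End ℂ V :=
      AddMonoidHom.mk' (fun z => LieModule.toEnd ℂ (A ⊗[ℂ] L) V (f ⊗ₜ[ℂ] z))
        (fun z1 z2 => by simp only [tmul_add, map_add]) with hφdef
    have hφ : ∀ z : L, φ z = LieModule.toEnd ℂ (A ⊗[ℂ] L) V (f ⊗ₜ[ℂ] z) := fun z => rfl
    have hzsm : ((m : ℂ) - (j : ℂ)) • d (j + m) = (m - j : ℤ) • d (j + m) := by
      rw [← Int.cast_smul_eq_zsmul ℂ]
      norm_num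
    have hzsm2 : ((m - j : ℤ) : ℤ) • T (j + m) = ((m : ℂ) - (j : ℂ)) • T (j + m) := by
      rw [← Int.cast_smul_eq_zsmul ℂ]
      norm_num
    have harg : LieModule.toEnd ℂ (A ⊗[ℂ] L) V (f ⊗ₜ[ℂ] ⁅d j, d m⁆)
        = ((m : ℂ) - (j : ℂ)) • T (j + m) := by
      calc LieModule.toEnd ℂ (A ⊗[ℂ] L) V (f ⊗ₜ[ℂ] ⁅d j, d m⁆)
          = φ ⁅d j, d m⁆ := (hφ _).symm
        _ = φ ((m - j : ℤ) • d (j + m)) + φ (μ • c) := by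
            rw [hdd j m, hzsm, map_add]
        _ = (m - j : ℤ) • φ (d (j + m))
            + LieModule.toEnd ℂ (A ⊗[ℂ] L) V (f ⊗ₜ[ℂ] (μ • c)) := by
            rw [map_zsmul, hφ, hφ]
        _ = (m - j : ℤ) • T (j + m)
            + LieModule.toEnd ℂ (A ⊗[ℂ] L) V ((μ • f) ⊗ₜ[ℂ] c) := by
            rw [hφ, smul_tmul]
        _ = ((m : ℂ) - (j : ℂ)) • T (j + m) := by rw [hgc, add_zero, hzsm2]
    have h := (LieModule.toEnd ℂ (A ⊗[ℂ] L) V).map_lie ((1 : A) ⊗ₜ[ℂ] d j) (f ⊗ₜ[ℂ] d m)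
    rw [LieAlgebra.ExtendScalars.bracket_tmul, one_mul, harg, Ring.lie_def] at h
    exact sub_eq_iff_eq_add'.mp h.symm
  have hN0 : T 0 ^ N = 0 := by
    ext v
    simpa using hN v
  have main := sqz_aux T E hcomm hCE N hN0
  constructor
  · intro r hr i _ v
    have h := main r hr (List.ofFn i) (by simp)
    rw [LinearMap.ext_iff] at h
    simpa only [hTdef, List.map_ofFn, Function.comp_def, LinearMap.zero_apply] using h v
  · intro i v
    have h := main N le_rfl (List.ofFn i) (by simp)
    rw [Nat.sub_self, pow_zero, mul_one, LinearMap.ext_iff] at h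
    simpa only [hTdef, List.map_ofFn, Function.comp_def, LinearMap.zero_apply] using h v
end

section
/- In the universal enveloping algebra of 𝒱 = Vir ⊗ A, for any ideal J ⊴ A and any M ∈ ℕ₊, one has (U(𝒱)·(Vir ⊗ J)·U(𝒱))^M = U(𝒱)·(Vir ⊗ J)^M·U(𝒱), where powers are taken in U(𝒱). -/
open TensorProduct

section

variable {L : Type*} [LieRing L] [LieAlgebra ℂ L]
variable {A : Type*} [CommRing A] [Algebra ℂ A] [LieAlgebra ℂ (A ⊗[ℂ] L)]

/-- Induction principle for the universal enveloping algebra. -/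
theorem ue_induction {R M : Type*} [CommRing R] [LieRing M] [LieAlgebra R M]
    {C : UniversalEnvelopingAlgebra R M → Prop}
    (halg : ∀ r, C (algebraMap R (UniversalEnvelopingAlgebra R M) r))
    (hι : ∀ x, C (UniversalEnvelopingAlgebra.ι R x))
    (hmul : ∀ a b, C a → C b → C (a * b))
    (hadd : ∀ a b, C a → C b → C (a + b))
    (a : UniversalEnvelopingAlgebra R M) : C a := by
  obtain ⟨t, rfl⟩ : ∃ t, UniversalEnvelopingAlgebra.mkAlgHom R M t = a :=
    RingCon.mk'_surjective _ a
  induction t using TensorAlgebra.induction with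
  | algebraMap r => rw [AlgHom.commutes]; exact halg r
  | ι x => exact hι x
  | mul a b ha hb => rw [map_mul]; exact hmul _ _ ha hb
  | add a b ha hb => rw [map_add]; exact hadd _ _ ha hb

/-- The subspace `Vir ⊗ J` of `𝒱 = Vir ⊗ A` (realized as `A ⊗[ℂ] L`), viewed inside the
universal enveloping algebra `U(𝒱)` via `ι`. -/
noncomputable def virTensorIdeal (J : Ideal A) :
    Submodule ℂ (UniversalEnvelopingAlgebra ℂ (A ⊗[ℂ] L)) :=
  Submodule.span ℂ ((UniversalEnvelopingAlgebra.ι ℂ) ''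
    {x : A ⊗[ℂ] L | ∃ f ∈ J, ∃ u : L, x = f ⊗ₜ[ℂ] u})

/-- Commutators of generators of `Vir ⊗ J` with arbitrary `ι`-images land back in `Vir ⊗ J`. -/
theorem vir_comm_mem (J : Ideal A) {f : A} (hf : f ∈ J) (u : L) (y : A ⊗[ℂ] L) :
    UniversalEnvelopingAlgebra.ι ℂ (f ⊗ₜ[ℂ] u : A ⊗[ℂ] L) * UniversalEnvelopingAlgebra.ι ℂ y
      - UniversalEnvelopingAlgebra.ι ℂ y * UniversalEnvelopingAlgebra.ι ℂ (f ⊗ₜ[ℂ] u : A ⊗[ℂ] L)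
      ∈ virTensorIdeal (L := L) J := by
  induction y using TensorProduct.induction_on with
  | zero => simp [virTensorIdeal]
  | tmul b v =>
      have h : UniversalEnvelopingAlgebra.ι ℂ (f ⊗ₜ[ℂ] u : A ⊗[ℂ] L) *
            UniversalEnvelopingAlgebra.ι ℂ (b ⊗ₜ[ℂ] v : A ⊗[ℂ] L)
          - UniversalEnvelopingAlgebra.ι ℂ (b ⊗ₜ[ℂ] v : A ⊗[ℂ] L) *
            UniversalEnvelopingAlgebra.ι ℂ (f ⊗ₜ[ℂ] u : A ⊗[ℂ] L)
          = UniversalEnvelopingAlgebra.ι ℂ ⁅(f ⊗ₜ[ℂ] u : A ⊗[ℂ] L), (b ⊗ₜ[ℂ] v : A ⊗[ℂ] L)⁆ := by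
        letI := LieRing.ofAssociativeRing (A := UniversalEnvelopingAlgebra ℂ (A ⊗[ℂ] L))
        rw [LieHom.map_lie, Ring.lie_def]
      rw [h, LieAlgebra.ExtendScalars.bracket_tmul]
      exact Submodule.subset_span ⟨(f * b) ⊗ₜ[ℂ] ⁅u, v⁆, ⟨f * b, J.mul_mem_right b hf, ⁅u, v⁆, rfl⟩, rfl⟩
  | add y₁ y₂ h₁ h₂ =>
      have h : UniversalEnvelopingAlgebra.ι ℂ (y₁ + y₂) =
          UniversalEnvelopingAlgebra.ι ℂ y₁ + UniversalEnvelopingAlgebra.ι ℂ y₂ :=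
        map_add _ _ _
      rw [h]
      have e : UniversalEnvelopingAlgebra.ι ℂ (f ⊗ₜ[ℂ] u : A ⊗[ℂ] L) *
            (UniversalEnvelopingAlgebra.ι ℂ y₁ + UniversalEnvelopingAlgebra.ι ℂ y₂)
          - (UniversalEnvelopingAlgebra.ι ℂ y₁ + UniversalEnvelopingAlgebra.ι ℂ y₂) *
            UniversalEnvelopingAlgebra.ι ℂ (f ⊗ₜ[ℂ] u : A ⊗[ℂ] L)
          = (UniversalEnvelopingAlgebra.ι ℂ (f ⊗ₜ[ℂ] u : A ⊗[ℂ] L) *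
              UniversalEnvelopingAlgebra.ι ℂ y₁
            - UniversalEnvelopingAlgebra.ι ℂ y₁ *
              UniversalEnvelopingAlgebra.ι ℂ (f ⊗ₜ[ℂ] u : A ⊗[ℂ] L))
          + (UniversalEnvelopingAlgebra.ι ℂ (f ⊗ₜ[ℂ] u : A ⊗[ℂ] L) *
              UniversalEnvelopingAlgebra.ι ℂ y₂
            - UniversalEnvelopingAlgebra.ι ℂ y₂ *
              UniversalEnvelopingAlgebra.ι ℂ (f ⊗ₜ[ℂ] u : A ⊗[ℂ] L)) := by
        rw [mul_add, add_mul]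
        abel
      rw [e]
      exact Submodule.add_mem _ h₁ h₂

theorem virTensorIdeal_mul_top_le (J : Ideal A) :
    (virTensorIdeal (L := L) J) * ⊤ ≤ ⊤ * virTensorIdeal J := by
  set V := virTensorIdeal (L := L) J with hVdef
  have hVle : ∀ v ∈ V, v ∈ (⊤ : Submodule ℂ _) * V := by
    intro v hv
    simpa using Submodule.mul_mem_mul (Submodule.mem_top (x := (1 : _))) hv
  have main : ∀ u : UniversalEnvelopingAlgebra ℂ (A ⊗[ℂ] L), ∀ v ∈ V,
      v * u ∈ (⊤ : Submodule ℂ _) * V := by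
    intro u
    induction u using ue_induction with
    | halg r =>
        intro v hv
        rw [← Algebra.commutes, ← Algebra.smul_def]
        exact Submodule.smul_mem _ r (hVle v hv)
    | hι y =>
        intro v hv
        induction hv using Submodule.span_induction with
        | mem v hv =>
            obtain ⟨s, hs', rfl⟩ := hv
            obtain ⟨f, hf, u, rfl⟩ := hs'
            have key : (UniversalEnvelopingAlgebra.ι ℂ (f ⊗ₜ[ℂ] u : A ⊗[ℂ] L)) *
                (UniversalEnvelopingAlgebra.ι ℂ y)
                = (UniversalEnvelopingAlgebra.ι ℂ y) *
                    (UniversalEnvelopingAlgebra.ι ℂ (f ⊗ₜ[ℂ] u : A ⊗[ℂ] L))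
                  + (UniversalEnvelopingAlgebra.ι ℂ (f ⊗ₜ[ℂ] u : A ⊗[ℂ] L) *
                      UniversalEnvelopingAlgebra.ι ℂ y
                    - UniversalEnvelopingAlgebra.ι ℂ y *
                      UniversalEnvelopingAlgebra.ι ℂ (f ⊗ₜ[ℂ] u : A ⊗[ℂ] L)) := by
              abel
            rw [key]
            refine Submodule.add_mem _
              (Submodule.mul_mem_mul Submodule.mem_top
                (Submodule.subset_span ⟨f ⊗ₜ[ℂ] u, ⟨f, hf, u, rfl⟩, rfl⟩)) ?_
            exact hVle _ (vir_comm_mem J hf u y)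
        | zero => rw [zero_mul]; exact Submodule.zero_mem _
        | add a b _ _ ha hb => rw [add_mul]; exact Submodule.add_mem _ ha hb
        | smul c a _ ha => rw [smul_mul_assoc]; exact Submodule.smul_mem _ c ha
    | hmul a b ha hb =>
        intro v hv
        rw [← mul_assoc]
        have h1 : v * a ∈ (⊤ : Submodule ℂ _) * V := ha v hv
        refine Submodule.mul_induction_on h1 (fun m _ n hn => ?_) (fun x y hx hy => ?_)
        · rw [mul_assoc]
          have h2 : n * b ∈ (⊤ : Submodule ℂ _) * V := hb n hn
          refine Submodule.mul_induction_on h2 (fun m' _ n' hn' => ?_) (fun x y hx hy => ?_)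
          · rw [← mul_assoc]
            exact Submodule.mul_mem_mul Submodule.mem_top hn'
          · rw [mul_add]; exact Submodule.add_mem _ hx hy
        · rw [add_mul]; exact Submodule.add_mem _ hx hy
    | hadd a b ha hb =>
        intro v hv
        rw [mul_add]
        exact Submodule.add_mem _ (ha v hv) (hb v hv)
  exact Submodule.mul_le.mpr fun v hv u _ => main u v hv

/-- In the universal enveloping algebra of `𝒱 = Vir ⊗ A`, for any ideal `J ⊴ A` and any
`M ≥ 1`, one has `(U(𝒱)·(Vir ⊗ J)·U(𝒱))^M = U(𝒱)·(Vir ⊗ J)^M·U(𝒱)`. -/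
theorem enveloping_ideal_power (c : L) (d : ℤ → L)
    (hli : LinearIndependent ℂ (fun o : Option ℤ => o.elim c d))
    (hspan : Submodule.span ℂ (Set.range (fun o : Option ℤ => o.elim c d)) = ⊤)
    (hdc : ∀ n : ℤ, ⁅d n, c⁆ = 0)
    (hdd : ∀ m n : ℤ, ⁅d m, d n⁆ = ((n : ℂ) - (m : ℂ)) • d (m + n)
      + (if m + n = 0 then (((m : ℂ) ^ 3 - (m : ℂ)) / 12) else 0) • c)
    (J : Ideal A) (M : ℕ) (hM : 0 < M) :
    ((⊤ : Submodule ℂ (UniversalEnvelopingAlgebra ℂ (A ⊗[ℂ] L))) * virTensorIdeal J * ⊤) ^ M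
      = (⊤ : Submodule ℂ (UniversalEnvelopingAlgebra ℂ (A ⊗[ℂ] L)))
          * virTensorIdeal J ^ M * ⊤ := by
  set V := virTensorIdeal (L := L) J with hVdef
  have hkey : V * ⊤ ≤ ⊤ * V := virTensorIdeal_mul_top_le J
  -- generic facts
  have hleR : ∀ X : Submodule ℂ (UniversalEnvelopingAlgebra ℂ (A ⊗[ℂ] L)), X ≤ X * ⊤ := by
    intro X x hx
    simpa using Submodule.mul_mem_mul hx (Submodule.mem_top (x := (1 : _)))
  have hleL : ∀ X : Submodule ℂ (UniversalEnvelopingAlgebra ℂ (A ⊗[ℂ] L)), X ≤ ⊤ * X := by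
    intro X x hx
    simpa using Submodule.mul_mem_mul (Submodule.mem_top (x := (1 : _))) hx
  have htop : (⊤ : Submodule ℂ (UniversalEnvelopingAlgebra ℂ (A ⊗[ℂ] L))) * ⊤ = ⊤ :=
    le_antisymm le_top (hleR ⊤)
  -- powers of V move past ⊤
  have hpow : ∀ k : ℕ, V ^ k * ⊤ ≤ ⊤ * V ^ k := by
    intro k
    induction k with
    | zero => rw [pow_zero, one_mul, mul_one]
    | succ k ih =>
        calc V ^ (k + 1) * ⊤ = V ^ k * (V * ⊤) := by rw [pow_succ, mul_assoc]
        _ ≤ V ^ k * (⊤ * V) := mul_le_mul' le_rfl hkey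
        _ = (V ^ k * ⊤) * V := by rw [mul_assoc]
        _ ≤ (⊤ * V ^ k) * V := mul_le_mul' ih le_rfl
        _ = ⊤ * V ^ (k + 1) := by rw [mul_assoc, pow_succ]
  have hfwd : ∀ k : ℕ, (⊤ * V) ^ k ≤ ⊤ * V ^ k := by
    intro k
    induction k with
    | zero => rw [pow_zero, pow_zero]; exact hleL 1
    | succ k ih =>
        calc (⊤ * V) ^ (k + 1) = (⊤ * V) ^ k * (⊤ * V) := pow_succ _ _
        _ ≤ (⊤ * V ^ k) * (⊤ * V) := mul_le_mul' ih le_rfl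
        _ = ⊤ * (V ^ k * ⊤) * V := by rw [mul_assoc, mul_assoc, mul_assoc]
        _ ≤ ⊤ * (⊤ * V ^ k) * V := mul_le_mul'
              (mul_le_mul' le_rfl (hpow k)) le_rfl
        _ = (⊤ * ⊤) * (V ^ k * V) := by rw [mul_assoc, mul_assoc, mul_assoc]
        _ = ⊤ * V ^ (k + 1) := by rw [htop, pow_succ]
  have hTVT : ⊤ * V * ⊤ ≤ ⊤ * V :=
    calc ⊤ * V * ⊤ = ⊤ * (V * ⊤) := mul_assoc _ _ _
    _ ≤ ⊤ * (⊤ * V) := mul_le_mul' le_rfl hkey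
    _ = (⊤ * ⊤) * V := (mul_assoc _ _ _).symm
    _ ≤ ⊤ * V := mul_le_mul' le_top le_rfl
  have hmono : ∀ (X Y : Submodule ℂ (UniversalEnvelopingAlgebra ℂ (A ⊗[ℂ] L))) (k : ℕ),
      X ≤ Y → X ^ k ≤ Y ^ k := by
    intro X Y k h
    induction k with
    | zero => exact le_rfl
    | succ k ih => rw [pow_succ, pow_succ]; exact mul_le_mul' ih h
  obtain ⟨m, rfl⟩ : ∃ m, M = m + 1 := ⟨M - 1, (Nat.succ_pred_eq_of_pos hM).symm⟩
  clear hM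
  refine le_antisymm ?_ ?_
  · calc (⊤ * V * ⊤) ^ (m + 1) ≤ (⊤ * V) ^ (m + 1) := hmono _ _ _ hTVT
    _ ≤ ⊤ * V ^ (m + 1) := hfwd _
    _ ≤ ⊤ * V ^ (m + 1) * ⊤ := hleR _
  · -- reverse direction
    induction m with
    | zero => rw [pow_one, pow_one]
    | succ k ih =>
        calc ⊤ * V ^ (k + 2) * ⊤ = (⊤ * V ^ (k + 1)) * (V * ⊤) := by
              rw [pow_succ, mul_assoc, mul_assoc, mul_assoc]
        _ ≤ (⊤ * V ^ (k + 1) * ⊤) * (⊤ * V * ⊤) :=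
              mul_le_mul' (hleR _) (mul_le_mul' (hleL _) le_rfl)
        _ ≤ (⊤ * V * ⊤) ^ (k + 1) * (⊤ * V * ⊤) := mul_le_mul' ih le_rfl
        _ = (⊤ * V * ⊤) ^ (k + 2) := (pow_succ _ _).symm

end
end
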